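/- The Kullback-Leibler divergence of N(0,Σ₂) from N(0,Σ₁), where Σ_j = Σ_ν λ_ν θ_ν^{(j)} (θ_ν^{(j)})^T + I with each {θ_ν^{(j)}}_ν orthonormal, equals (1/2) Σ_{ν=1}^M η(λ_ν)λ_ν − (1/2) Σ_{ν=1}^M Σ_{ν'=1}^M η(λ_ν) λ_{ν'} |⟨θ_{ν'}^{(1)}, θ_ν^{(2)}⟩|². -/

import Mathlib

open Matrix Finset

section aux
variable {N M : ℕ}

lemma vmv_mul_vmv (u v x y : Fin N → ℝ) :
    vecMulVec u v * vecMulVec x y = (v ⬝ᵥ x) • vecMulVec u y := by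
  ext i j
  simp only [Matrix.mul_apply, vecMulVec_apply, Matrix.smul_apply, dotProduct,
    smul_eq_mul]
  rw [Finset.sum_mul]
  exact Finset.sum_congr rfl fun k _ => by ring

lemma trace_vmv (u v : Fin N → ℝ) : (vecMulVec u v).trace = u ⬝ᵥ v := by
  simp [Matrix.trace, Matrix.diag, vecMulVec_apply, dotProduct]

lemma fac_eq (l : Fin M → ℝ) (θ : Fin M → Fin N → ℝ) :
    (Matrix.of fun i ν => θ ν i) * Matrix.diagonal l * (Matrix.of fun i ν => θ ν i)ᵀ
      = ∑ ν, l ν • vecMulVec (θ ν) (θ ν) := by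
  have h1 : (Matrix.of fun i ν => θ ν i) * Matrix.diagonal l
      = Matrix.of fun i ν => θ ν i * l ν := by
    ext i ν
    rw [Matrix.mul_diagonal]
    rfl
  rw [h1]
  ext i j
  rw [Matrix.mul_apply, Matrix.sum_apply]
  refine Finset.sum_congr rfl fun k _ => ?_
  simp only [Matrix.of_apply, Matrix.transpose_apply, Matrix.smul_apply, vecMulVec_apply,
    smul_eq_mul]
  ring

lemma det_spiked (l : Fin M → ℝ) (θ : Fin M → Fin N → ℝ)
    (horth : ∀ ν ν', θ ν ⬝ᵥ θ ν' = if ν = ν' then 1 else 0) :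
    (∑ ν, l ν • vecMulVec (θ ν) (θ ν) + (1 : Matrix (Fin N) (Fin N) ℝ)).det
      = ∏ ν, (1 + l ν) := by
  have hgram : (Matrix.of fun i ν => θ ν i)ᵀ * (Matrix.of fun i ν => θ ν i) = 1 := by
    ext ν ν'
    simpa [Matrix.mul_apply, dotProduct, Matrix.one_apply] using horth ν ν'
  rw [← fac_eq, Matrix.mul_assoc, Matrix.det_mul_add_one_comm, Matrix.mul_assoc, hgram,
    Matrix.mul_one]
  rw [show (Matrix.diagonal l + 1 : Matrix (Fin M) (Fin M) ℝ)
      = Matrix.diagonal (fun ν => l ν + 1) by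
    simp [← Matrix.diagonal_one, Matrix.diagonal_add]]
  rw [Matrix.det_diagonal]
  exact Finset.prod_congr rfl fun ν _ => by ring

end aux

/-- KL divergence of `N(0,B)` from `N(0,A)`: `(1/2)[tr(B⁻¹A) − N + log(det B / det A)]`. -/
noncomputable def klGauss {N : ℕ} (A B : Matrix (Fin N) (Fin N) ℝ) : ℝ :=
  (1 / 2) * ((B⁻¹ * A).trace - N + Real.log (B.det / A.det))

theorem kl_spiked_models (N M : ℕ) (hM : 1 ≤ M) (hMN : M ≤ N)
    (l : Fin M → ℝ) (hl : ∀ ν, 0 < l ν)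
    (θ₁ θ₂ : Fin M → Fin N → ℝ)
    (horth₁ : ∀ ν ν', dotProduct (θ₁ ν) (θ₁ ν') = if ν = ν' then 1 else 0)
    (horth₂ : ∀ ν ν', dotProduct (θ₂ ν) (θ₂ ν') = if ν = ν' then 1 else 0) :
    klGauss (∑ ν, l ν • Matrix.vecMulVec (θ₁ ν) (θ₁ ν) + 1)
        (∑ ν, l ν • Matrix.vecMulVec (θ₂ ν) (θ₂ ν) + 1)
      = (1 / 2) * ∑ ν, (l ν / (1 + l ν)) * l ν
        - (1 / 2) * ∑ ν, ∑ ν', (l ν / (1 + l ν)) * l ν' *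
            (dotProduct (θ₁ ν') (θ₂ ν)) ^ 2 := by
  have h1l : ∀ ν, (1 : ℝ) + l ν ≠ 0 := fun ν => by have := hl ν; positivity
  set η : Fin M → ℝ := fun ν => l ν / (1 + l ν) with hη
  set S₁ : Matrix (Fin N) (Fin N) ℝ := ∑ ν, l ν • vecMulVec (θ₁ ν) (θ₁ ν) with hS₁
  set S₂ : Matrix (Fin N) (Fin N) ℝ := ∑ ν, l ν • vecMulVec (θ₂ ν) (θ₂ ν) with hS₂
  set T : Matrix (Fin N) (Fin N) ℝ := ∑ ν, η ν • vecMulVec (θ₂ ν) (θ₂ ν) with hT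
  -- product of spikes in θ₂
  have hmul : ∀ (a b : Fin M → ℝ),
      (∑ ν, a ν • vecMulVec (θ₂ ν) (θ₂ ν)) * (∑ ν, b ν • vecMulVec (θ₂ ν) (θ₂ ν))
        = ∑ ν, (a ν * b ν) • vecMulVec (θ₂ ν) (θ₂ ν) := by
    intro a b
    rw [Finset.sum_mul]
    refine Finset.sum_congr rfl fun ν _ => ?_
    rw [Finset.mul_sum]
    rw [Finset.sum_eq_single ν]
    · rw [smul_mul_assoc, mul_smul_comm, vmv_mul_vmv, horth₂ ν ν, if_pos rfl, one_smul,
        smul_smul]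
    · intro ν' _ hne
      rw [smul_mul_assoc, mul_smul_comm, vmv_mul_vmv, horth₂ ν ν', if_neg (Ne.symm hne),
        zero_smul, smul_zero, smul_zero]
    · intro h; exact absurd (Finset.mem_univ ν) h
  -- B⁻¹ = 1 - T
  have hS2T : S₂ = S₂ * T + T := by
    rw [hS₂, hT, hmul, ← Finset.sum_add_distrib]
    refine Finset.sum_congr rfl fun ν _ => ?_
    rw [← add_smul]
    congr 1
    have h := h1l ν
    rw [hη]
    field_simp
    ring
  have hBC : (S₂ + 1) * (1 - T) = 1 := by
    rw [add_mul, one_mul, mul_sub, mul_one]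
    nth_rewrite 1 [hS2T]
    abel
  have hBinv : (S₂ + 1)⁻¹ = 1 - T := Matrix.inv_eq_right_inv hBC
  -- trace computation
  have hTS : (T * S₁).trace = ∑ ν, ∑ ν', η ν * l ν' * (θ₁ ν' ⬝ᵥ θ₂ ν) ^ 2 := by
    rw [hT, hS₁, Finset.sum_mul, Matrix.trace_sum]
    refine Finset.sum_congr rfl fun ν _ => ?_
    rw [Finset.mul_sum, Matrix.trace_sum]
    refine Finset.sum_congr rfl fun ν' _ => ?_
    rw [smul_mul_assoc, mul_smul_comm, vmv_mul_vmv, smul_smul, smul_smul, Matrix.trace_smul,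
      trace_vmv, smul_eq_mul, dotProduct_comm (θ₂ ν)]
    ring
  have htrS₁ : S₁.trace = ∑ ν, l ν := by
    rw [hS₁, Matrix.trace_sum]
    refine Finset.sum_congr rfl fun ν _ => ?_
    rw [Matrix.trace_smul, trace_vmv, horth₁ ν ν, if_pos rfl, smul_eq_mul, mul_one]
  have htrT : T.trace = ∑ ν, η ν := by
    rw [hT, Matrix.trace_sum]
    refine Finset.sum_congr rfl fun ν _ => ?_
    rw [Matrix.trace_smul, trace_vmv, horth₂ ν ν, if_pos rfl, smul_eq_mul, mul_one]
  have htr : ((1 - T) * (S₁ + 1)).trace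
      = S₁.trace + (N : ℝ) - (T * S₁).trace - T.trace := by
    rw [sub_mul, one_mul, mul_add, mul_one, Matrix.trace_sub, Matrix.trace_add,
      Matrix.trace_add, Matrix.trace_one]
    simp [Fintype.card_fin]
    ring
  -- determinants
  have hdetA : (S₁ + 1).det = ∏ ν, (1 + l ν) := det_spiked l θ₁ horth₁
  have hdetB : (S₂ + 1).det = ∏ ν, (1 + l ν) := det_spiked l θ₂ horth₂
  have hdet0 : (∏ ν, (1 + l ν)) ≠ 0 := Finset.prod_ne_zero_iff.mpr fun ν _ => h1l ν
  have hlog : Real.log ((S₂ + 1).det / (S₁ + 1).det) = 0 := by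
    rw [hdetA, hdetB, div_self hdet0, Real.log_one]
  -- put it together
  rw [klGauss, hBinv, htr, hlog, htrS₁, htrT, hTS]
  simp only [hη]
  have hsum : (∑ ν, l ν) - (∑ ν, l ν / (1 + l ν)) = ∑ ν, l ν / (1 + l ν) * l ν := by
    rw [← Finset.sum_sub_distrib]
    refine Finset.sum_congr rfl fun ν _ => ?_
    have h := h1l ν
    field_simp
    ring
  linarith [hsum]
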